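/- Define d(h) = (h · log((1+√(1−4h))/(1−√(1−4h)))) / ((1+8h)·√(1−4h)) for h ∈ (0, 1/4). Then lim_{h→1/4⁻} d(h) = 1/6 and lim_{h→0⁺} d(h) = 0, and d is strictly increasing on (0, 1/4). -/

import Mathlib

open Real Set Filter Topology

/-- The expected inverse root degree of the type-I PSHT, as a function of `h`. -/
noncomputable def dPSHT (h : ℝ) : ℝ :=
  h * Real.log ((1 + Real.sqrt (1 - 4 * h)) / (1 - Real.sqrt (1 - 4 * h))) /
    ((1 + 8 * h) * Real.sqrt (1 - 4 * h))

/-- `dPSHT` after the substitution `x = √(1-4h)`. -/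
noncomputable def gPSHT (x : ℝ) : ℝ :=
  (1 - x ^ 2) * (Real.log (1 + x) - Real.log (1 - x)) / (4 * (x * (3 - 2 * x ^ 2)))

lemma sqrt_mem {h : ℝ} (hh : h ∈ Set.Ioo (0 : ℝ) (1 / 4)) :
    Real.sqrt (1 - 4 * h) ∈ Set.Ioo (0 : ℝ) 1 := by
  obtain ⟨h0, h4⟩ := hh
  have h14 : 0 < 1 - 4 * h := by linarith
  have hx0 : 0 < Real.sqrt (1 - 4 * h) := Real.sqrt_pos.2 h14
  have hx1 : Real.sqrt (1 - 4 * h) < 1 := by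
    have := Real.sqrt_lt_sqrt h14.le (by linarith : 1 - 4 * h < 1)
    simpa using this
  exact ⟨hx0, hx1⟩

lemma dPSHT_eq {h : ℝ} (hh : h ∈ Set.Ioo (0 : ℝ) (1 / 4)) :
    dPSHT h = gPSHT (Real.sqrt (1 - 4 * h)) := by
  obtain ⟨h0, h4⟩ := hh
  have h14 : 0 ≤ 1 - 4 * h := by linarith
  set x := Real.sqrt (1 - 4 * h) with hxdef
  obtain ⟨hx0, hx1⟩ := sqrt_mem ⟨h0, h4⟩
  have hx2 : x ^ 2 = 1 - 4 * h := Real.sq_sqrt h14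
  have h1p : (0 : ℝ) < 1 + x := by linarith
  have h1m : (0 : ℝ) < 1 - x := by linarith
  have hc : (0 : ℝ) < 3 - 2 * x ^ 2 := by nlinarith
  unfold dPSHT gPSHT
  rw [Real.log_div h1p.ne' h1m.ne']
  rw [show 1 - x ^ 2 = 4 * h by linarith, show 1 + 8 * h = 3 - 2 * x ^ 2 by linarith]
  have hxne : x ≠ 0 := hx0.ne'
  clear_value x
  rw [← hxdef]
  field_simp

/-- The key logarithm lower bound. -/
lemma log_lb {x : ℝ} (hx : 0 < x) (hx1 : x < 1) :
    2 * x + 2 / 3 * x ^ 3 ≤ Real.log (1 + x) - Real.log (1 - x) := by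
  set f : ℝ → ℝ := fun y => Real.log (1 + y) - Real.log (1 - y) - (2 * y + 2 / 3 * y ^ 3)
    with hfdef
  have hder : ∀ y ∈ Set.Ico (0 : ℝ) 1,
      HasDerivAt f (1 / (1 + y) - -1 / (1 - y) - (2 + 2 * y ^ 2)) y := by
    intro y hy
    have h1p : (0 : ℝ) < 1 + y := by linarith [hy.1]
    have h1m : (0 : ℝ) < 1 - y := by linarith [hy.2]
    have hl1 : HasDerivAt (fun z : ℝ => Real.log (1 + z)) (1 / (1 + y)) y := by
      simpa using (HasDerivAt.log ((hasDerivAt_id y).const_add 1) h1p.ne')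
    have hl2 : HasDerivAt (fun z : ℝ => Real.log (1 - z)) (-1 / (1 - y)) y := by
      simpa using (HasDerivAt.log ((hasDerivAt_id y).const_sub 1) h1m.ne')
    have hp : HasDerivAt (fun z : ℝ => 2 * z + 2 / 3 * z ^ 3) (2 + 2 * y ^ 2) y := by
      have := ((hasDerivAt_id y).const_mul 2).add ((hasDerivAt_pow 3 y).const_mul (2 / 3))
      refine this.congr_deriv ?_
      push_cast
      ring
    exact (hl1.sub hl2).sub hp
  have hmono : MonotoneOn f (Set.Ico (0 : ℝ) 1) := by
    apply monotoneOn_of_deriv_nonneg (convex_Ico 0 1)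
    · exact fun y hy => (hder y hy).differentiableAt.continuousAt.continuousWithinAt
    · rw [interior_Ico]
      exact fun y hy => (hder y ⟨hy.1.le, hy.2⟩).differentiableAt.differentiableWithinAt
    · rw [interior_Ico]
      intro y hy
      rw [(hder y ⟨hy.1.le, hy.2⟩).deriv]
      have h1p : (0 : ℝ) < 1 + y := by linarith [hy.1]
      have h1m : (0 : ℝ) < 1 - y := by linarith [hy.2]
      have key : 1 / (1 + y) - -1 / (1 - y) - (2 + 2 * y ^ 2)
          = 2 * y ^ 4 / ((1 + y) * (1 - y)) := by
        field_simp
        ring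
      rw [key]
      positivity
  have h0 : f 0 = 0 := by simp [hfdef]
  have := hmono ⟨le_refl 0, zero_lt_one⟩ ⟨hx.le, hx1⟩ hx.le
  rw [h0] at this
  simp only [hfdef] at this
  linarith

lemma hasDerivAt_g {x : ℝ} (hx : 0 < x) (hx1 : x < 1) :
    HasDerivAt gPSHT
      (((-(2 * x) * (Real.log (1 + x) - Real.log (1 - x))
          + (1 - x ^ 2) * (1 / (1 + x) + 1 / (1 - x))) * (4 * (x * (3 - 2 * x ^ 2)))
        - (1 - x ^ 2) * (Real.log (1 + x) - Real.log (1 - x)) * (12 - 24 * x ^ 2))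
        / (4 * (x * (3 - 2 * x ^ 2))) ^ 2) x := by
  have h1p : (0 : ℝ) < 1 + x := by linarith
  have h1m : (0 : ℝ) < 1 - x := by linarith
  have hc : (0 : ℝ) < 3 - 2 * x ^ 2 := by nlinarith
  have hl1 : HasDerivAt (fun z : ℝ => Real.log (1 + z)) (1 / (1 + x)) x := by
    simpa using (HasDerivAt.log ((hasDerivAt_id x).const_add 1) h1p.ne')
  have hl2 : HasDerivAt (fun z : ℝ => Real.log (1 - z)) (-1 / (1 - x)) x := by
    simpa using (HasDerivAt.log ((hasDerivAt_id x).const_sub 1) h1m.ne')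
  have hq : HasDerivAt (fun z : ℝ => 1 - z ^ 2) (-(2 * x)) x := by
    simpa using ((hasDerivAt_pow 2 x).const_sub 1)
  have hN : HasDerivAt (fun z : ℝ => (1 - z ^ 2) * (Real.log (1 + z) - Real.log (1 - z)))
      (-(2 * x) * (Real.log (1 + x) - Real.log (1 - x))
        + (1 - x ^ 2) * (1 / (1 + x) + 1 / (1 - x))) x := by
    have := hq.mul (hl1.sub hl2)
    refine this.congr_deriv ?_
    simp only [Pi.sub_apply]
    ring
  have hD : HasDerivAt (fun z : ℝ => 4 * (z * (3 - 2 * z ^ 2))) (12 - 24 * x ^ 2) x := by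
    have hc' : HasDerivAt (fun z : ℝ => 3 - 2 * z ^ 2) (-(2 * (2 * x))) x := by
      simpa using (((hasDerivAt_pow 2 x).const_mul 2).const_sub 3)
    have := ((hasDerivAt_id x).mul hc').const_mul (4 : ℝ)
    refine this.congr_deriv ?_
    simp only [id_eq]
    ring
  have hDne : 4 * (x * (3 - 2 * x ^ 2)) ≠ 0 := by positivity
  exact hN.div hD hDne

lemma g_anti : StrictAntiOn gPSHT (Set.Ioo (0 : ℝ) 1) := by
  apply strictAntiOn_of_deriv_neg (convex_Ioo 0 1)
  · exact fun x hx =>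
      (hasDerivAt_g hx.1 hx.2).differentiableAt.continuousAt.continuousWithinAt
  · rw [interior_Ioo]
    intro x hx
    obtain ⟨hx0, hx1⟩ := hx
    rw [(hasDerivAt_g hx0 hx1).deriv]
    have h1p : (0 : ℝ) < 1 + x := by linarith
    have h1m : (0 : ℝ) < 1 - x := by linarith
    have hc : (0 : ℝ) < 3 - 2 * x ^ 2 := by nlinarith
    set L := Real.log (1 + x) - Real.log (1 - x) with hLdef
    have hL : 2 * x + 2 / 3 * x ^ 3 ≤ L := log_lb hx0 hx1
    have hkey : (1 - x ^ 2) * (1 / (1 + x) + 1 / (1 - x)) = 2 := by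
      field_simp
      ring
    apply div_neg_of_neg_of_pos
    · rw [hkey]
      have hcpos : (0 : ℝ) < 8 * x ^ 4 - 12 * x ^ 2 + 12 := by
        nlinarith [sq_nonneg (x ^ 2 - 3 / 4)]
      have hcl : (8 * x ^ 4 - 12 * x ^ 2 + 12) * (2 * x + 2 / 3 * x ^ 3)
          ≤ (8 * x ^ 4 - 12 * x ^ 2 + 12) * L :=
        mul_le_mul_of_nonneg_left hL hcpos.le
      nlinarith [pow_pos hx0 5, pow_pos hx0 7, hcl]
    · positivity

lemma g_to_sixth : Tendsto gPSHT (𝓝[>] (0 : ℝ)) (𝓝 (1 / 6)) := by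
  have hd : HasDerivAt (fun z : ℝ => Real.log (1 + z) - Real.log (1 - z)) 2 0 := by
    have hl1 : HasDerivAt (fun z : ℝ => Real.log (1 + z)) (1 / (1 + (0 : ℝ))) 0 := by
      simpa using (HasDerivAt.log ((hasDerivAt_id (0 : ℝ)).const_add 1) (by norm_num))
    have hl2 : HasDerivAt (fun z : ℝ => Real.log (1 - z)) (-1 / (1 - (0 : ℝ))) 0 := by
      simpa using (HasDerivAt.log ((hasDerivAt_id (0 : ℝ)).const_sub 1) (by norm_num))
    have := hl1.sub hl2
    refine this.congr_deriv ?_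
    norm_num
  have hslope := hasDerivAt_iff_tendsto_slope.1 hd
  have h1 : Tendsto (fun x : ℝ => (Real.log (1 + x) - Real.log (1 - x)) / x)
      (𝓝[>] 0) (𝓝 2) := by
    have hmono : 𝓝[>] (0 : ℝ) ≤ 𝓝[≠] (0 : ℝ) :=
      nhdsWithin_mono 0 (fun y hy => ne_of_gt hy)
    refine (hslope.mono_left hmono).congr' ?_
    filter_upwards [self_mem_nhdsWithin] with y hy
    simp [slope_def_field]
  have h2 : Tendsto (fun x : ℝ => (1 - x ^ 2) / (4 * (3 - 2 * x ^ 2)))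
      (𝓝[>] 0) (𝓝 (1 / 12)) := by
    have hct : ContinuousAt (fun x : ℝ => (1 - x ^ 2) / (4 * (3 - 2 * x ^ 2))) 0 := by
      apply ContinuousAt.div
      · fun_prop
      · fun_prop
      · norm_num
    have ht := hct.tendsto.mono_left (nhdsWithin_le_nhds (s := Set.Ioi (0 : ℝ)))
    convert ht using 2
    norm_num
  have hprod := h1.mul h2
  norm_num at hprod
  refine hprod.congr' ?_
  filter_upwards [Ioo_mem_nhdsGT_of_mem (by norm_num : (0 : ℝ) ∈ Set.Ico (0 : ℝ) 1)]
    with x hx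
  obtain ⟨hx0, hx1⟩ := hx
  have hc : (0 : ℝ) < 3 - 2 * x ^ 2 := by nlinarith
  unfold gPSHT
  field_simp

lemma g_to_zero : Tendsto gPSHT (𝓝[<] (1 : ℝ)) (𝓝 0) := by
  have ha : Tendsto (fun x : ℝ => (1 - x ^ 2) * Real.log (1 + x)) (𝓝 1) (𝓝 0) := by
    have : ContinuousAt (fun x : ℝ => (1 - x ^ 2) * Real.log (1 + x)) 1 := by
      apply ContinuousAt.mul
      · fun_prop
      · exact (Real.continuousAt_log (by norm_num)).comp (by fun_prop)
    have := this.tendsto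
    norm_num at this
    exact this
  have hb : Tendsto (fun x : ℝ => (1 + x) * ((1 - x) * Real.log (1 - x))) (𝓝 1) (𝓝 0) := by
    have h1 : Tendsto (fun x : ℝ => (1 - x) * Real.log (1 - x)) (𝓝 1) (𝓝 0) := by
      have hcomp : Tendsto (fun x : ℝ => 1 - x) (𝓝 (1 : ℝ)) (𝓝 0) := by
        have : ContinuousAt (fun x : ℝ => 1 - x) 1 := by fun_prop
        have := this.tendsto
        norm_num at this
        exact this
      have := (Real.continuous_mul_log.tendsto 0).comp hcomp
      simpa [Function.comp_def] using this
    have h2 : Tendsto (fun x : ℝ => 1 + x) (𝓝 (1 : ℝ)) (𝓝 2) := by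
      have : ContinuousAt (fun x : ℝ => 1 + x) 1 := by fun_prop
      have := this.tendsto
      norm_num at this
      exact this
    have := h2.mul h1
    simpa using this
  have hnum : Tendsto (fun x : ℝ => (1 - x ^ 2) * (Real.log (1 + x) - Real.log (1 - x)))
      (𝓝 1) (𝓝 0) := by
    have := ha.sub hb
    simp only [sub_zero] at this
    refine Tendsto.congr ?_ this
    · intro x
      ring
  have hden : Tendsto (fun x : ℝ => 4 * (x * (3 - 2 * x ^ 2))) (𝓝 (1 : ℝ)) (𝓝 4) := by
    have : ContinuousAt (fun x : ℝ => 4 * (x * (3 - 2 * x ^ 2))) 1 := by fun_prop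
    have := this.tendsto
    norm_num at this
    exact this
  have := hnum.div hden (by norm_num)
  norm_num at this
  exact (this.mono_left nhdsWithin_le_nhds)

lemma s_tendsto_zero :
    Tendsto (fun h : ℝ => Real.sqrt (1 - 4 * h)) (𝓝[<] (1 / 4 : ℝ)) (𝓝[>] 0) := by
  apply tendsto_nhdsWithin_of_tendsto_nhds_of_eventually_within
  · have hct : ContinuousAt (fun h : ℝ => Real.sqrt (1 - 4 * h)) (1 / 4) :=
      Real.continuous_sqrt.continuousAt.comp (by fun_prop)
    have ht : Tendsto (fun h : ℝ => Real.sqrt (1 - 4 * h)) (𝓝 (1 / 4))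
        (𝓝 (Real.sqrt (1 - 4 * (1 / 4)))) := hct.tendsto
    rw [show (1 : ℝ) - 4 * (1 / 4) = 0 by norm_num, Real.sqrt_zero] at ht
    exact ht.mono_left nhdsWithin_le_nhds
  · filter_upwards [self_mem_nhdsWithin] with h hh
    exact Real.sqrt_pos.2 (by simp only [Set.mem_Iio] at hh; linarith)

lemma s_tendsto_one :
    Tendsto (fun h : ℝ => Real.sqrt (1 - 4 * h)) (𝓝[>] (0 : ℝ)) (𝓝[<] 1) := by
  apply tendsto_nhdsWithin_of_tendsto_nhds_of_eventually_within
  · have hct : ContinuousAt (fun h : ℝ => Real.sqrt (1 - 4 * h)) 0 :=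
      Real.continuous_sqrt.continuousAt.comp (by fun_prop)
    have ht : Tendsto (fun h : ℝ => Real.sqrt (1 - 4 * h)) (𝓝 0)
        (𝓝 (Real.sqrt (1 - 4 * 0))) := hct.tendsto
    rw [show (1 : ℝ) - 4 * 0 = 1 by norm_num, Real.sqrt_one] at ht
    exact ht.mono_left nhdsWithin_le_nhds
  · filter_upwards [Ioo_mem_nhdsGT_of_mem (by norm_num : (0 : ℝ) ∈ Set.Ico (0 : ℝ) (1 / 4))]
      with h hh
    exact (sqrt_mem hh).2

/-- `d(h) → 1/6` as `h → 1/4⁻`, `d(h) → 0` as `h → 0⁺`, and `d` is strictly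
increasing on `(0, 1/4)`. -/
theorem stmt14 :
    Filter.Tendsto dPSHT (nhdsWithin (1 / 4 : ℝ) (Set.Iio (1 / 4))) (nhds (1 / 6)) ∧
    Filter.Tendsto dPSHT (nhdsWithin (0 : ℝ) (Set.Ioi 0)) (nhds 0) ∧
    StrictMonoOn dPSHT (Set.Ioo (0 : ℝ) (1 / 4)) := by
  refine ⟨?_, ?_, ?_⟩
  · refine (g_to_sixth.comp s_tendsto_zero).congr' ?_
    filter_upwards [Ioo_mem_nhdsLT_of_mem
      (by norm_num : (1 / 4 : ℝ) ∈ Set.Ioc (0 : ℝ) (1 / 4))] with h hh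
    exact (dPSHT_eq hh).symm
  · refine (g_to_zero.comp s_tendsto_one).congr' ?_
    filter_upwards [Ioo_mem_nhdsGT_of_mem
      (by norm_num : (0 : ℝ) ∈ Set.Ico (0 : ℝ) (1 / 4))] with h hh
    exact (dPSHT_eq hh).symm
  · intro a ha b hb hab
    rw [dPSHT_eq ha, dPSHT_eq hb]
    refine g_anti (sqrt_mem hb) (sqrt_mem ha) ?_
    exact Real.sqrt_lt_sqrt (by linarith [hb.2]) (by linarith)
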